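/- Let (E, ‖·‖) be a complete L^∞-normed module with L^0-extension E_0. Then every x ∈ E_0 can be written as x = ξ * y for some ξ ∈ L^0 and y ∈ E; that is, E_0 = L^0 * E. -/

import Mathlib

open MeasureTheory Filter
noncomputable section

variable {Ω : Type} [MeasurableSpace Ω] {μ : Measure Ω}

/-- `L⁰(𝓕)`: equivalence classes of random variables, as a commutative ring. -/
instance : NatCast (Ω →ₘ[μ] ℝ) := ⟨fun n => AEEqFun.const Ω (n : ℝ)⟩
instance : IntCast (Ω →ₘ[μ] ℝ) := ⟨fun n => AEEqFun.const Ω (n : ℝ)⟩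
instance : CommRing (Ω →ₘ[μ] ℝ) :=
  AEEqFun.toGerm_injective.commRing AEEqFun.toGerm AEEqFun.zero_toGerm AEEqFun.one_toGerm
    AEEqFun.add_toGerm AEEqFun.mul_toGerm AEEqFun.neg_toGerm AEEqFun.sub_toGerm
    (fun _ _ => AEEqFun.smul_toGerm _ _) (fun _ _ => AEEqFun.smul_toGerm _ _)
    AEEqFun.pow_toGerm (fun _ => rfl) (fun _ => rfl)

/-- `L^∞(𝓕)`: the subring of essentially bounded random variables. -/
def Linf (μ : Measure Ω) : Subring (Ω →ₘ[μ] ℝ) where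
  carrier := {ξ | ∃ c : ℝ, ∀ᵐ ω ∂μ, |ξ ω| ≤ c}
  zero_mem' := ⟨0, by filter_upwards [AEEqFun.coeFn_zero (β := ℝ) (μ := μ)] with ω h; simp [h]⟩
  one_mem' := ⟨1, by filter_upwards [AEEqFun.coeFn_one (β := ℝ) (μ := μ)] with ω h; simp [h]⟩
  add_mem' := by
    rintro a b ⟨c, hc⟩ ⟨d, hd⟩
    exact ⟨c + d, by
      filter_upwards [AEEqFun.coeFn_add a b, hc, hd] with ω h1 h2 h3
      calc |(a + b) ω| = |a ω + b ω| := by rw [h1]; rfl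
        _ ≤ |a ω| + |b ω| := abs_add_le _ _
        _ ≤ c + d := add_le_add h2 h3⟩
  mul_mem' := by
    rintro a b ⟨c, hc⟩ ⟨d, hd⟩
    exact ⟨|c| * |d|, by
      filter_upwards [AEEqFun.coeFn_mul a b, hc, hd] with ω h1 h2 h3
      calc |(a * b) ω| = |a ω * b ω| := by rw [h1]; rfl
        _ = |a ω| * |b ω| := abs_mul _ _
        _ ≤ |c| * |d| :=
            mul_le_mul (h2.trans (le_abs_self c)) (h3.trans (le_abs_self d))
              (abs_nonneg _) (abs_nonneg _)⟩
  neg_mem' := by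
    rintro a ⟨c, hc⟩
    exact ⟨c, by
      filter_upwards [AEEqFun.coeFn_neg a, hc] with ω h1 h2
      calc |(-a) ω| = |-(a ω)| := by rw [h1]; rfl
        _ = |a ω| := abs_neg _
        _ ≤ c := h2⟩

/-- the constant `c`, as an element of `L^∞`. -/
def LinfConst (μ : Measure Ω) (c : ℝ) : Linf μ :=
  ⟨AEEqFun.const Ω c, |c|, by
    filter_upwards [AEEqFun.coeFn_const (α := Ω) (μ := μ) c] with ω h
    simp [h, Function.const]⟩

/-- the equivalence class `Ĩ_A` of the indicator function of a set `A`. -/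
def indL0 (μ : Measure Ω) (A : Set Ω) (hA : MeasurableSet A) : Ω →ₘ[μ] ℝ :=
  AEEqFun.mk (A.indicator (1 : Ω → ℝ)) ((measurable_const.indicator hA).aestronglyMeasurable)

/-- a countable measurable partition of `Ω`. -/
structure MPartition (Ω : Type) [MeasurableSpace Ω] where
  A : ℕ → Set Ω
  meas : ∀ k, MeasurableSet (A k)
  disj : ∀ m k, m ≠ k → A m ∩ A k = ∅
  cover : (⋃ k, A k) = Set.univ

/-- `Ĩ_{A_k}` for a member of a countable measurable partition. -/
def MPartition.ind (P : MPartition Ω) (μ : Measure Ω) (k : ℕ) : Ω →ₘ[μ] ℝ :=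
  indL0 μ (P.A k) (P.meas k)

/-- `‖·‖` is an `L⁰`-norm making the `L⁰`-module `S` a random normed module. -/
structure IsRNNorm (μ : Measure Ω) {S : Type} [AddCommGroup S]
    [Module (Ω →ₘ[μ] ℝ) S] (n : S → Ω →ₘ[μ] ℝ) : Prop where
  nonneg : ∀ x, 0 ≤ n x
  eq_zero_iff : ∀ x, n x = 0 ↔ x = 0
  norm_smul : ∀ (ξ : Ω →ₘ[μ] ℝ) (x : S), n (ξ • x) = |ξ| * n x
  norm_add_le : ∀ x y, n (x + y) ≤ n x + n y

/-- `‖·‖` is an `L^∞`-norm making the `L^∞`-module `E` an `L^∞`-normed module. -/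
structure IsLinfNorm (μ : Measure Ω) {E : Type} [AddCommGroup E]
    [Module (Linf μ) E] (n : E → Ω →ₘ[μ] ℝ) : Prop where
  nonneg : ∀ x, 0 ≤ n x
  mem_Linf : ∀ x, n x ∈ Linf μ
  eq_zero_iff : ∀ x, n x = 0 ↔ x = 0
  norm_smul : ∀ (ξ : Linf μ) (x : E), n (ξ • x) = |(ξ : Ω →ₘ[μ] ℝ)| * n x
  norm_add_le : ∀ x y, n (x + y) ≤ n x + n y

/-- the metric `d(x,y) = E[1 ∧ ‖x-y‖]` associated to an `L⁰`- (or `L^∞`-) norm. -/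
def ndist {S : Type} [AddCommGroup S] (μ : Measure Ω) (n : S → Ω →ₘ[μ] ℝ) (x y : S) : ℝ :=
  ∫ ω, min 1 |n (x - y) ω| ∂μ

/-- the distance of convergence in probability on `L⁰`. -/
def dProb (μ : Measure Ω) (ξ η : Ω →ₘ[μ] ℝ) : ℝ := ∫ ω, min 1 |ξ ω - η ω| ∂μ

/-- Cauchy property of a sequence with respect to a distance function. -/
def dCauchy {S : Type} (d : S → S → ℝ) (x : ℕ → S) : Prop :=
  ∀ ε > (0:ℝ), ∃ N : ℕ, ∀ m ≥ N, ∀ k ≥ N, d (x m) (x k) < ε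

/-- convergence of a sequence with respect to a distance function. -/
def dTendsto {S : Type} (d : S → S → ℝ) (x : ℕ → S) (y : S) : Prop :=
  Tendsto (fun k => d (x k) y) atTop (nhds 0)

/-- completeness with respect to a distance function. -/
def dComplete {S : Type} (d : S → S → ℝ) : Prop :=
  ∀ x : ℕ → S, dCauchy d x → ∃ y, dTendsto d x y

/-- a bundled complete-or-not random normed module over `L⁰(𝓕)`. -/
structure RNMod (Ω : Type) [MeasurableSpace Ω] (μ : Measure Ω) where
  carrier : Type
  acg : AddCommGroup carrier
  mod : @Module (Ω →ₘ[μ] ℝ) carrier _ acg.toAddCommMonoid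
  rnorm : carrier → Ω →ₘ[μ] ℝ
  isRNNorm : IsRNNorm μ rnorm

attribute [instance] RNMod.acg RNMod.mod

/-- the metric of the `(ε,λ)`-topology of a random normed module. -/
def RNMod.dist (S : RNMod Ω μ) : S.carrier → S.carrier → ℝ := ndist μ S.rnorm

/-- completeness of a random normed module in the `(ε,λ)`-topology. -/
def RNMod.Complete (S : RNMod Ω μ) : Prop := dComplete S.dist

/-- the essential supremum `‖ξ‖_∞` of (the absolute value of) a random variable. -/
def NinfV (μ : Measure Ω) (ξ : Ω →ₘ[μ] ℝ) : ℝ := essSup (fun ω => |ξ ω|) μ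

/-- `T` is an `L^∞`-module homomorphism from `E` into (the `L^∞`-module underlying) `S`. -/
def IsLinfModHom (μ : Measure Ω) {E S : Type} [AddCommGroup E] [Module (Linf μ) E]
    [AddCommGroup S] [Module (Ω →ₘ[μ] ℝ) S] (T : E → S) : Prop :=
  (∀ x y, T (x + y) = T x + T y) ∧
  (∀ (ξ : Linf μ) (x : E), T (ξ • x) = ((ξ : Ω →ₘ[μ] ℝ)) • T x)

/-- `S` together with `T` is an `L⁰`-extension of the `L^∞`-normed module `(E, n)`:
`S` is a complete random normed module, `T` is a norm-preserving `L^∞`-module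
homomorphism with dense range. -/
def IsL0Extension (μ : Measure Ω) {E : Type} [AddCommGroup E] [Module (Linf μ) E]
    (n : E → Ω →ₘ[μ] ℝ) (S : RNMod Ω μ) (T : E → S.carrier) : Prop :=
  S.Complete ∧ IsLinfModHom μ T ∧ (∀ x, S.rnorm (T x) = n x) ∧
  (∀ y : S.carrier, ∀ ε > (0:ℝ), ∃ x : E, S.dist (T x) y < ε)

/-- the set of elements of an `L⁰`-normed module with essentially bounded norm. -/
def LinfPart (μ : Measure Ω) {S : Type} (n : S → Ω →ₘ[μ] ℝ) : Set S := {x | n x ∈ Linf μ}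

/-- convergence in probability of a sequence of random variables. -/
def TendstoInProb (μ : Measure Ω) (ξ : ℕ → Ω →ₘ[μ] ℝ) (l : Ω →ₘ[μ] ℝ) : Prop :=
  Tendsto (fun k => dProb μ (ξ k) l) atTop (nhds 0)

/-- the countable concatenation hull `H⁰_cc(E)` of a subset `E` of a random normed module. -/
def Hcc (S : RNMod Ω μ) (E : Set S.carrier) : Set S.carrier :=
  {z | ∃ (x : ℕ → S.carrier) (P : MPartition Ω),
    (∀ k, x k ∈ E) ∧ ∀ k, P.ind μ k • z = P.ind μ k • x k}

/-- `L(E) = L⁰ * E`, the set of `L⁰`-multiples of elements of `E`. -/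
def Lgen (S : RNMod Ω μ) (E : Set S.carrier) : Set S.carrier :=
  {z | ∃ (ξ : Ω →ₘ[μ] ℝ) (x : S.carrier), x ∈ E ∧ z = ξ • x}

/-- `f` is a continuous `L^∞`-module homomorphism from `(E, n)` to `L^∞`, i.e. a member of
the dual `L^∞`-normed module `E′`. -/
def IsLinfDual (μ : Measure Ω) {E : Type} [AddCommGroup E] [Module (Linf μ) E]
    (n : E → Ω →ₘ[μ] ℝ) (f : E → Ω →ₘ[μ] ℝ) : Prop :=
  (∀ x, f x ∈ Linf μ) ∧ (∀ x y, f (x + y) = f x + f y) ∧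
  (∀ (ξ : Linf μ) (x : E), f (ξ • x) = (ξ : Ω →ₘ[μ] ℝ) * f x) ∧
  (∀ ε > (0:ℝ), ∃ δ > (0:ℝ), ∀ x, NinfV μ (n x) < δ → NinfV μ (f x) < ε)

/-- `g` is a continuous `L⁰`-module homomorphism from `S` to `L⁰`, i.e. a member of the
random conjugate space `S^*`. -/
def IsRNDual (μ : Measure Ω) (S : RNMod Ω μ) (g : S.carrier → Ω →ₘ[μ] ℝ) : Prop :=
  (∀ x y, g (x + y) = g x + g y) ∧ (∀ (ξ : Ω →ₘ[μ] ℝ) x, g (ξ • x) = ξ * g x) ∧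
  (∀ ε > (0:ℝ), ∃ δ > (0:ℝ), ∀ x, ndist μ S.rnorm x 0 < δ → dProb μ (g x) 0 < ε)

/-- the set `{|f(x)| : ‖x‖ ≤ 1}` whose supremum in the lattice `L⁰` is the dual norm `‖f‖′`. -/
def dualBall {X : Type} (n : X → Ω →ₘ[μ] ℝ) (f : X → Ω →ₘ[μ] ℝ) : Set (Ω →ₘ[μ] ℝ) :=
  {t | ∃ x, n x ≤ 1 ∧ t = |f x|}

/-! ### Auxiliary lemmas -/

section Aux

variable {Ω : Type} [MeasurableSpace Ω] {μ : Measure Ω}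

lemma aux_eq_of_ae {f g : Ω →ₘ[μ] ℝ} (h : ∀ᵐ ω ∂μ, f ω = g ω) : f = g := AEEqFun.ext h

lemma aux_le_of_ae {f g : Ω →ₘ[μ] ℝ} (h : ∀ᵐ ω ∂μ, f ω ≤ g ω) : f ≤ g := AEEqFun.coeFn_le.1 h

lemma aux_ae_of_le {f g : Ω →ₘ[μ] ℝ} (h : f ≤ g) : ∀ᵐ ω ∂μ, f ω ≤ g ω := AEEqFun.coeFn_le.2 h

lemma aux_NinfV_le [IsProbabilityMeasure μ] {f : Ω →ₘ[μ] ℝ} {c : ℝ}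
    (h : ∀ᵐ ω ∂μ, |f ω| ≤ c) : NinfV μ f ≤ c := by
  have hb : IsCoboundedUnder (· ≤ ·) (ae μ) fun ω => |f ω| :=
    IsBoundedUnder.isCoboundedUnder_le
      ⟨0, eventually_map.2 (Eventually.of_forall fun ω => abs_nonneg _)⟩
  exact limsup_le_of_le hb h

lemma aux_ae_le_NinfV {f : Ω →ₘ[μ] ℝ} (h : f ∈ Linf μ) :
    ∀ᵐ ω ∂μ, |f ω| ≤ NinfV μ f := by
  obtain ⟨c, hc⟩ := h
  exact ae_le_essSup ⟨c, eventually_map.2 hc⟩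

lemma aux_indL0_coeFn (A : Set Ω) (hA : MeasurableSet A) :
    ⇑(indL0 μ A hA) =ᵐ[μ] A.indicator 1 := AEEqFun.coeFn_mk _ _

lemma aux_mul_coeFn (f g : Ω →ₘ[μ] ℝ) : ⇑(f * g) =ᵐ[μ] fun ω => f ω * g ω :=
  AEEqFun.coeFn_mul f g

lemma aux_abs_coeFn (f : Ω →ₘ[μ] ℝ) : ⇑|f| =ᵐ[μ] fun ω => |f ω| :=
  AEEqFun.coeFn_abs f

/-- the indicator as an element of `L^∞`. -/
def indLinf (μ : Measure Ω) (A : Set Ω) (hA : MeasurableSet A) : Linf μ :=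
  ⟨indL0 μ A hA, 1, by
    filter_upwards [aux_indL0_coeFn (μ := μ) A hA] with ω h
    rw [h]
    classical
    by_cases hω : ω ∈ A <;> simp [Set.indicator_apply, hω]⟩

lemma aux_indL0_null {A : Set Ω} (hA : MeasurableSet A) (h : μ A = 0) :
    indL0 μ A hA = 0 := by
  apply aux_eq_of_ae
  filter_upwards [aux_indL0_coeFn A hA, AEEqFun.coeFn_zero (β := ℝ) (μ := μ),
    measure_eq_zero_iff_ae_notMem.1 h] with ω h1 h2 h3
  classical
  rw [h1, h2, Set.indicator_apply]
  simp [h3]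

lemma aux_indL0_sub {A B : Set Ω} (hA : MeasurableSet A) (hB : MeasurableSet B)
    (hAB : A ⊆ B) :
    indL0 μ B hB - indL0 μ A hA = indL0 μ (B \ A) (hB.diff hA) := by
  apply aux_eq_of_ae
  filter_upwards [AEEqFun.coeFn_sub (indL0 μ B hB) (indL0 μ A hA),
    aux_indL0_coeFn A hA, aux_indL0_coeFn B hB, aux_indL0_coeFn (B \ A) (hB.diff hA)]
      with ω h1 h2 h3 h4
  classical
  rw [h1, Pi.sub_apply, h2, h3, h4]
  by_cases hωA : ω ∈ A
  · simp [Set.indicator_apply, hωA, hAB hωA]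
  · by_cases hωB : ω ∈ B <;> simp [Set.indicator_apply, hωA, hωB]

section Mod

variable (S : RNMod Ω μ)

lemma aux_rnorm_nonneg (v : S.carrier) : ∀ᵐ ω ∂μ, 0 ≤ (S.rnorm v) ω := by
  filter_upwards [aux_ae_of_le (S.isRNNorm.nonneg v),
    AEEqFun.coeFn_zero (β := ℝ) (μ := μ)] with ω h1 h2
  rw [h2, Pi.zero_apply] at h1; exact h1

lemma aux_rnorm_neg (v : S.carrier) : S.rnorm (-v) = S.rnorm v := by
  have h1 : ((-1 : Ω →ₘ[μ] ℝ)) • v = -v := by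
    rw [neg_smul, one_smul]
  rw [← h1, S.isRNNorm.norm_smul]
  apply aux_eq_of_ae
  filter_upwards [aux_mul_coeFn |(-1 : Ω →ₘ[μ] ℝ)| (S.rnorm v),
    aux_abs_coeFn (-1 : Ω →ₘ[μ] ℝ), AEEqFun.coeFn_neg (1 : Ω →ₘ[μ] ℝ),
    AEEqFun.coeFn_one (β := ℝ) (μ := μ)] with ω h1 h2 h3 h4
  rw [h1, h2, h3, Pi.neg_apply, h4]
  simp

lemma aux_rnorm_sub_rev (v w : S.carrier) : S.rnorm (v - w) = S.rnorm (w - v) := by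
  rw [← aux_rnorm_neg S (w - v), neg_sub]

lemma aux_rnorm_triangle (a b c : S.carrier) :
    ∀ᵐ ω ∂μ, (S.rnorm (a - c)) ω ≤ (S.rnorm (a - b)) ω + (S.rnorm (b - c)) ω := by
  have h := S.isRNNorm.norm_add_le (a - b) (b - c)
  rw [sub_add_sub_cancel] at h
  filter_upwards [aux_ae_of_le h,
    AEEqFun.coeFn_add (S.rnorm (a - b)) (S.rnorm (b - c))] with ω h1 h2
  rw [h2] at h1; exact h1

lemma aux_rnorm_smul_coeFn (ξ : Ω →ₘ[μ] ℝ) (v : S.carrier) :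
    ∀ᵐ ω ∂μ, (S.rnorm (ξ • v)) ω = |ξ ω| * (S.rnorm v) ω := by
  rw [S.isRNNorm.norm_smul]
  filter_upwards [aux_mul_coeFn |ξ| (S.rnorm v), aux_abs_coeFn ξ] with ω h1 h2
  rw [h1, h2]

/-- two vectors whose difference has random norm a.e. squeezed to `0` are equal. -/
lemma aux_eq_of_ae_le_seq (v w : S.carrier) (ε : ℕ → ℝ) (K0 : ℕ)
    (hε : Tendsto ε atTop (nhds 0))
    (h : ∀ K, K0 ≤ K → ∀ᵐ ω ∂μ, (S.rnorm (v - w)) ω ≤ ε K) : v = w := by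
  have hall : ∀ᵐ ω ∂μ, (∀ K : ℕ, (S.rnorm (v - w)) ω ≤ ε (K + K0)) ∧
      0 ≤ (S.rnorm (v - w)) ω := by
    refine ((ae_all_iff).2 fun K => h (K + K0) (le_add_self)).and (aux_rnorm_nonneg S _)
  have hz : ∀ᵐ ω ∂μ, (S.rnorm (v - w)) ω = 0 := by
    filter_upwards [hall] with ω ⟨h1, h2⟩
    have hε' : Tendsto (fun K => ε (K + K0)) atTop (nhds 0) :=
      hε.comp (tendsto_add_atTop_nat K0)
    exact le_antisymm (ge_of_tendsto' hε' h1) h2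
  have : S.rnorm (v - w) = 0 := by
    apply aux_eq_of_ae
    filter_upwards [hz, AEEqFun.coeFn_zero (β := ℝ) (μ := μ)] with ω h1 h2
    simp [h1, h2]
  have := (S.isRNNorm.eq_zero_iff _).1 this
  exact sub_eq_zero.1 this

end Mod

section Hom

variable {E : Type} [AddCommGroup E] [Module (Linf μ) E] (S : RNMod Ω μ)
  {T : E → S.carrier}

lemma aux_T_zero (hT : IsLinfModHom μ T) : T 0 = 0 := by
  have := hT.1 0 0
  rw [add_zero] at this
  exact left_eq_add.1 this

lemma aux_T_sub (hT : IsLinfModHom μ T) (x y : E) : T (x - y) = T x - T y := by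
  have := hT.1 (x - y) y
  rw [sub_add_cancel] at this
  rw [this]; abel

lemma aux_T_sum (hT : IsLinfModHom μ T) (s : Finset ℕ) (f : ℕ → E) :
    T (∑ i ∈ s, f i) = ∑ i ∈ s, T (f i) := by
  classical
  induction s using Finset.cons_induction with
  | empty => simpa using aux_T_zero S hT
  | cons a s ha ih => rw [Finset.sum_cons, Finset.sum_cons, hT.1, ih]

end Hom

section Norm

variable {E : Type} [AddCommGroup E] [Module (Linf μ) E] {n : E → Ω →ₘ[μ] ℝ}

lemma aux_n_nonneg (hn : IsLinfNorm μ n) (x : E) : ∀ᵐ ω ∂μ, 0 ≤ (n x) ω := by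
  filter_upwards [aux_ae_of_le (hn.nonneg x), AEEqFun.coeFn_zero (β := ℝ) (μ := μ)] with ω h1 h2
  rw [h2, Pi.zero_apply] at h1; exact h1

lemma aux_n_zero (hn : IsLinfNorm μ n) : n 0 = 0 := (hn.eq_zero_iff 0).2 rfl

lemma aux_n_neg (hn : IsLinfNorm μ n) (x : E) : n (-x) = n x := by
  have h1 : ((-1 : Linf μ)) • x = -x := by rw [neg_smul, one_smul]
  rw [← h1, hn.norm_smul]
  apply aux_eq_of_ae
  have hco : ((-1 : Linf μ) : Ω →ₘ[μ] ℝ) = -1 := rfl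
  rw [hco]
  filter_upwards [aux_mul_coeFn |(-1 : Ω →ₘ[μ] ℝ)| (n x),
    aux_abs_coeFn (-1 : Ω →ₘ[μ] ℝ), AEEqFun.coeFn_neg (1 : Ω →ₘ[μ] ℝ),
    AEEqFun.coeFn_one (β := ℝ) (μ := μ)] with ω h1 h2 h3 h4
  rw [h1, h2, h3, Pi.neg_apply, h4]
  simp

lemma aux_n_sub_rev (hn : IsLinfNorm μ n) (x y : E) : n (x - y) = n (y - x) := by
  rw [← aux_n_neg hn (y - x), neg_sub]

lemma aux_n_sum_le (hn : IsLinfNorm μ n) (s : Finset ℕ) (f : ℕ → E) (c : ℕ → ℝ)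
    (h : ∀ i ∈ s, ∀ᵐ ω ∂μ, |(n (f i)) ω| ≤ c i) :
    ∀ᵐ ω ∂μ, |(n (∑ i ∈ s, f i)) ω| ≤ ∑ i ∈ s, c i := by
  classical
  induction s using Finset.cons_induction with
  | empty =>
    rw [Finset.sum_empty, Finset.sum_empty, aux_n_zero hn]
    filter_upwards [AEEqFun.coeFn_zero (β := ℝ) (μ := μ)] with ω h1
    rw [h1]; simp
  | cons a s ha ih =>
    rw [Finset.sum_cons, Finset.sum_cons]
    have hadd := aux_ae_of_le (hn.norm_add_le (f a) (∑ i ∈ s, f i))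
    filter_upwards [ih (fun i hi => h i (Finset.mem_cons_of_mem hi)), hadd,
      h a (Finset.mem_cons_self a s), aux_n_nonneg hn (f a + ∑ i ∈ s, f i),
      aux_n_nonneg hn (∑ i ∈ s, f i),
      AEEqFun.coeFn_add (n (f a)) (n (∑ i ∈ s, f i))] with ω h1 h2 h3 h4 h5 h6
    rw [h6, Pi.add_apply] at h2
    rw [abs_of_nonneg h4]
    calc (n (f a + ∑ i ∈ s, f i)) ω ≤ (n (f a)) ω + (n (∑ i ∈ s, f i)) ω := h2
      _ ≤ |(n (f a)) ω| + |(n (∑ i ∈ s, f i)) ω| := by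
          gcongr <;> exact le_abs_self _
      _ ≤ c a + ∑ i ∈ s, c i := add_le_add h3 h1

end Norm

lemma aux_markov [IsProbabilityMeasure μ] (f : Ω →ₘ[μ] ℝ) {c δ : ℝ} (hc0 : 0 < c)
    (hc1 : c ≤ 1) (h : (∫ ω, min 1 |f ω| ∂μ) < δ) :
    μ {ω | c < |f ω|} ≤ ENNReal.ofReal (δ / c) := by
  set s := {ω | c < |f ω|} with hs
  have hsm : MeasurableSet s := measurableSet_lt measurable_const f.measurable.abs
  have hgmeas : Measurable fun ω => min 1 |f ω| := measurable_const.min f.measurable.abs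
  have hint : Integrable (fun ω => min 1 |f ω|) μ :=
    (integrable_const (1 : ℝ)).mono' hgmeas.aestronglyMeasurable
      (ae_of_all _ fun ω => by
        rw [Real.norm_eq_abs, abs_of_nonneg (le_min zero_le_one (abs_nonneg _))]
        exact min_le_left _ _)
  have h2 : ∫ ω in s, (c : ℝ) ∂μ ≤ ∫ ω in s, min 1 |f ω| ∂μ := by
    refine setIntegral_mono_on (integrableOn_const (measure_ne_top μ s))
      hint.integrableOn hsm ?_
    intro ω hω
    exact le_min hc1 (le_of_lt hω)
  have h3 : ∫ ω in s, min 1 |f ω| ∂μ ≤ ∫ ω, min 1 |f ω| ∂μ :=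
    setIntegral_le_integral hint (ae_of_all _ fun ω => le_min zero_le_one (abs_nonneg _))
  have h1 : (μ s).toReal * c ≤ ∫ ω, min 1 |f ω| ∂μ := by
    have := (h2.trans h3)
    rwa [setIntegral_const, smul_eq_mul] at this
  have h4 : (μ s).toReal ≤ δ / c := by
    rw [le_div_iff₀ hc0]
    linarith
  calc μ s = ENNReal.ofReal ((μ s).toReal) := (ENNReal.ofReal_toReal (measure_ne_top μ s)).symm
    _ ≤ ENNReal.ofReal (δ / c) := ENNReal.ofReal_le_ofReal h4

lemma aux_step2 [IsProbabilityMeasure μ]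
    {E : Type} [AddCommGroup E] [Module (Linf μ) E]
    {n : E → Ω →ₘ[μ] ℝ} (hn : IsLinfNorm μ n)
    (hcomp : dComplete (fun x y : E => NinfV μ (n (x - y))))
    {S : RNMod Ω μ} {T : E → S.carrier} (hT : IsLinfModHom μ T)
    (hiso : ∀ x, S.rnorm (T x) = n x)
    (z : S.carrier) (x : ℕ → E)
    {A : Set Ω} (hA : MeasurableSet A) (k : ℕ)
    (hAk : ∀ ω ∈ A, ∀ j, k ≤ j → |(S.rnorm (T (x j) - z)) ω| ≤ (1/2:ℝ)^(j+1)) :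
    ∃ y : E, T y = (indL0 μ A hA) • z := by
  set I : Linf μ := indLinf μ A hA with hIdef
  have hIco : ((I : Ω →ₘ[μ] ℝ)) = indL0 μ A hA := rfl
  -- core estimate
  have hbound : ∀ i j, k ≤ i → k ≤ j → ∀ᵐ ω ∂μ,
      |(n (I • x i - I • x j)) ω| ≤ (1/2:ℝ)^(i+1) + (1/2:ℝ)^(j+1) := by
    intro i j hi hj
    have heq : n (I • x i - I • x j) =
        |indL0 μ A hA| * (S.rnorm (T (x i) - T (x j))) := by
      rw [← smul_sub, hn.norm_smul, hIco, ← aux_T_sub S hT, hiso]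
    have htri := aux_rnorm_triangle S (T (x i)) z (T (x j))
    have hrev : S.rnorm (z - T (x j)) = S.rnorm (T (x j) - z) := aux_rnorm_sub_rev S _ _
    rw [hrev] at htri
    rw [heq]
    filter_upwards [aux_mul_coeFn |indL0 μ A hA| (S.rnorm (T (x i) - T (x j))),
      aux_abs_coeFn (indL0 μ A hA), aux_indL0_coeFn A hA, htri,
      aux_rnorm_nonneg S (T (x i) - T (x j))] with ω h1 h2 h3 h4 h5
    rw [h1, h2, h3]
    by_cases hω : ω ∈ A
    · rw [Set.indicator_of_mem hω, Pi.one_apply, abs_one, one_mul, abs_of_nonneg h5]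
      calc (S.rnorm (T (x i) - T (x j))) ω
          ≤ (S.rnorm (T (x i) - z)) ω + (S.rnorm (T (x j) - z)) ω := h4
        _ ≤ |(S.rnorm (T (x i) - z)) ω| + |(S.rnorm (T (x j) - z)) ω| := by
            gcongr <;> exact le_abs_self _
        _ ≤ (1/2:ℝ)^(i+1) + (1/2:ℝ)^(j+1) :=
            add_le_add (hAk ω hω i hi) (hAk ω hω j hj)
    · rw [Set.indicator_of_notMem hω, abs_zero, zero_mul, abs_zero]
      positivity
  -- Cauchy
  have hCauchy : dCauchy (fun a b : E => NinfV μ (n (a - b))) (fun j => I • x j) := by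
    intro ε hε
    obtain ⟨M, hM⟩ := exists_pow_lt_of_lt_one hε (by norm_num : (1/2:ℝ) < 1)
    refine ⟨max k M, fun i hi j hj => ?_⟩
    have hik : k ≤ i := le_trans (le_max_left _ _) hi
    have hjk : k ≤ j := le_trans (le_max_left _ _) hj
    have hiM : M + 1 ≤ i + 1 := by
      have := le_trans (le_max_right k M) hi; omega
    have hjM : M + 1 ≤ j + 1 := by
      have := le_trans (le_max_right k M) hj; omega
    have h1 : NinfV μ (n (I • x i - I • x j)) ≤ (1/2:ℝ)^(i+1) + (1/2:ℝ)^(j+1) :=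
      aux_NinfV_le (hbound i j hik hjk)
    have h2 : (1/2:ℝ)^(i+1) ≤ (1/2:ℝ)^(M+1) :=
      pow_le_pow_of_le_one (by norm_num) (by norm_num) hiM
    have h3 : (1/2:ℝ)^(j+1) ≤ (1/2:ℝ)^(M+1) :=
      pow_le_pow_of_le_one (by norm_num) (by norm_num) hjM
    have h4 : (1/2:ℝ)^(M+1) + (1/2:ℝ)^(M+1) = (1/2:ℝ)^M := by ring
    calc NinfV μ (n (I • x i - I • x j)) ≤ (1/2:ℝ)^(i+1) + (1/2:ℝ)^(j+1) := h1
      _ ≤ (1/2:ℝ)^(M+1) + (1/2:ℝ)^(M+1) := add_le_add h2 h3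
      _ = (1/2:ℝ)^M := h4
      _ < ε := hM
  obtain ⟨y, hy⟩ := hcomp _ hCauchy
  refine ⟨y, ?_⟩
  -- limit identification
  refine aux_eq_of_ae_le_seq S (T y) ((indL0 μ A hA) • z)
    (fun j => NinfV μ (n (I • x j - y)) + (1/2:ℝ)^(j+1)) k ?_ ?_
  · have h5 : Tendsto (fun j : ℕ => (1/2:ℝ)^(j+1)) atTop (nhds 0) := by
      have := (tendsto_pow_atTop_nhds_zero_of_lt_one (by norm_num : (0:ℝ) ≤ 1/2)
        (by norm_num : (1/2:ℝ) < 1)).comp (tendsto_add_atTop_nat 1)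
      exact this
    simpa using hy.add h5
  · intro j hj
    have htri := aux_rnorm_triangle S (T y) (T (I • x j)) ((indL0 μ A hA) • z)
    have hterm1 : S.rnorm (T y - T (I • x j)) = n (y - I • x j) := by
      rw [← aux_T_sub S hT, hiso]
    have hterm2 : T (I • x j) - (indL0 μ A hA) • z = (indL0 μ A hA) • (T (x j) - z) := by
      rw [hT.2 I (x j), hIco, smul_sub]
    rw [hterm1, hterm2] at htri
    have hsm := aux_rnorm_smul_coeFn S (indL0 μ A hA) (T (x j) - z)
    have hNle := aux_ae_le_NinfV (hn.mem_Linf (y - I • x j))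
    have hrev : n (y - I • x j) = n (I • x j - y) := aux_n_sub_rev hn _ _
    rw [hrev] at htri hNle
    filter_upwards [htri, hsm, hNle, aux_indL0_coeFn A hA,
      aux_rnorm_nonneg S (T (x j) - z)] with ω h1 h2 h3 h4 h5
    refine h1.trans (add_le_add (le_trans (le_abs_self _) h3) ?_)
    rw [h2, h4]
    by_cases hω : ω ∈ A
    · rw [Set.indicator_of_mem hω, Pi.one_apply, abs_one, one_mul]
      exact le_trans (le_abs_self _) (hAk ω hω j hj)
    · rw [Set.indicator_of_notMem hω, abs_zero, zero_mul]
      positivity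

end Aux
/-- if `(E,‖·‖)` is a complete `L^∞`-normed module, then every element
of its `L⁰`-extension `E₀` is of the form `ξ • y` with `ξ ∈ L⁰` and `y ∈ E`;
that is, `E₀ = L⁰ * E`. -/
theorem L0_extension_eq_L0_smul_of_complete
    {Ω : Type} [MeasurableSpace Ω] (μ : Measure Ω) [IsProbabilityMeasure μ]
    {E : Type} [AddCommGroup E] [Module (Linf μ) E]
    (n : E → Ω →ₘ[μ] ℝ) (hn : IsLinfNorm μ n)
    (hcomp : dComplete (fun x y : E => NinfV μ (n (x - y))))
    (S : RNMod Ω μ) (T : E → S.carrier) (hext : IsL0Extension μ n S T) :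
    ∀ z : S.carrier, ∃ (ξ : Ω →ₘ[μ] ℝ) (y : E), z = ξ • T y := by
  obtain ⟨-, hT, hiso, hdense⟩ := hext
  intro z
  -- Step 1: a sequence approximating `z` in probability, with a.e. control sets
  have happrox : ∀ m : ℕ, ∃ xm : E, S.dist (T xm) z < (1/2:ℝ)^(m+1) * (1/2:ℝ)^(m+1) :=
    fun m => hdense z _ (by positivity)
  choose x hx using happrox
  have hμm : ∀ m : ℕ, μ {ω | (1/2:ℝ)^(m+1) < |(S.rnorm (T (x m) - z)) ω|}
      ≤ ENNReal.ofReal ((1/2:ℝ)^(m+1)) := by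
    intro m
    have h1 := hx m
    simp only [RNMod.dist, ndist] at h1
    have h2 := aux_markov (S.rnorm (T (x m) - z)) (c := (1/2:ℝ)^(m+1)) (by positivity)
      (pow_le_one₀ (by norm_num) (by norm_num)) h1
    have h3 : ((1/2:ℝ)^(m+1) * (1/2:ℝ)^(m+1)) / ((1/2:ℝ)^(m+1)) = (1/2:ℝ)^(m+1) := by
      field_simp
    rwa [h3] at h2
  have hsum : (∑' m, μ {ω | (1/2:ℝ)^(m+1) < |(S.rnorm (T (x m) - z)) ω|}) ≠ ⊤ := by
    have hsummable : Summable (fun m : ℕ => (1/2:ℝ)^(m+1)) := by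
      have := (summable_geometric_of_lt_one (by norm_num : (0:ℝ) ≤ 1/2)
        (by norm_num : (1/2:ℝ) < 1))
      exact (this.mul_left (1/2)).congr fun m => by rw [← pow_succ']
    have hne : (∑' m : ℕ, ENNReal.ofReal ((1/2:ℝ)^(m+1))) ≠ ⊤ := by
      rw [← ENNReal.ofReal_tsum_of_nonneg (fun m => by positivity) hsummable]
      exact ENNReal.ofReal_ne_top
    exact ne_top_of_le_ne_top hne (ENNReal.tsum_le_tsum hμm)
  have hBC : ∀ᵐ ω ∂μ, ∀ᶠ m in atTop,
      ω ∉ {ω | (1/2:ℝ)^(m+1) < |(S.rnorm (T (x m) - z)) ω|} :=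
    ae_eventually_notMem hsum
  set A : ℕ → Set Ω :=
    fun k => ⋂ j, {ω | k ≤ j → |(S.rnorm (T (x j) - z)) ω| ≤ (1/2:ℝ)^(j+1)} with hAdef
  have hAmem : ∀ k ω, ω ∈ A k ↔
      ∀ j, k ≤ j → |(S.rnorm (T (x j) - z)) ω| ≤ (1/2:ℝ)^(j+1) := by
    intro k ω
    simp [hAdef]
  have hAmeas : ∀ k, MeasurableSet (A k) := by
    intro k
    refine MeasurableSet.iInter fun j => ?_
    by_cases hkj : k ≤ j
    · simp only [hkj, true_implies]
      exact measurableSet_le (S.rnorm (T (x j) - z)).measurable.abs measurable_const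
    · have : {ω | k ≤ j → |(S.rnorm (T (x j) - z)) ω| ≤ (1/2:ℝ)^(j+1)} = Set.univ := by
        ext ω; simp [hkj]
      rw [this]
      exact MeasurableSet.univ
  have hAmono : ∀ {k l : ℕ}, k ≤ l → A k ⊆ A l := by
    intro k l hkl ω hω
    rw [hAmem] at hω ⊢
    exact fun j hj => hω j (hkl.trans hj)
  have hcover : ∀ᵐ ω ∂μ, ∃ k, ω ∈ A k := by
    filter_upwards [hBC] with ω hω
    obtain ⟨k, hk⟩ := eventually_atTop.1 hω
    exact ⟨k, (hAmem k ω).2 fun j hj => not_lt.1 (hk j hj)⟩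
  -- Step 2: elements of `E` realizing `z` on each `A k`
  have hyex : ∀ k : ℕ, ∃ y : E, T y = (indL0 μ (A k) (hAmeas k)) • z :=
    fun k => aux_step2 hn hcomp hT hiso z x (hAmeas k) k (fun ω hω => (hAmem k ω).1 hω)
  choose y hy using hyex
  -- Step 3: the partition
  set N : Set Ω := (⋃ k, A k)ᶜ with hNdef
  have hNmeas : MeasurableSet N := (MeasurableSet.iUnion fun k => hAmeas k).compl
  have hNnull : μ N = 0 := by
    rw [measure_eq_zero_iff_ae_notMem]
    filter_upwards [hcover] with ω hω
    simp only [hNdef, Set.mem_compl_iff, Set.mem_iUnion, not_not, not_exists, not_forall]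
    simpa using hω
  set B : ℕ → Set Ω := fun j => match j with
    | 0 => N
    | 1 => A 0
    | (k+2) => A (k+1) \ A k
    with hBdef
  have hBmeas : ∀ j, MeasurableSet (B j) := by
    rintro (_|_|k)
    · exact hNmeas
    · exact hAmeas 0
    · exact (hAmeas (k+1)).diff (hAmeas k)
  set u : ℕ → E := fun j => match j with
    | 0 => 0
    | 1 => y 0
    | (k+2) => y (k+1) - y k
    with hudef
  have hTu : ∀ j, T (u j) = (indL0 μ (B j) (hBmeas j)) • z := by
    rintro (_|_|k)
    · show T 0 = (indL0 μ N hNmeas) • z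
      rw [aux_T_zero S hT, aux_indL0_null _ hNnull, zero_smul]
    · exact hy 0
    · show T (y (k+1) - y k) = (indL0 μ (A (k+1) \ A k) ((hAmeas (k+1)).diff (hAmeas k))) • z
      rw [aux_T_sub S hT, hy (k+1), hy k, ← sub_smul,
        aux_indL0_sub (hAmeas k) (hAmeas (k+1)) (hAmono (Nat.le_succ k))]
  have hBsubA : ∀ k, B (k+1) ⊆ A k := by
    rintro (_|k)
    · exact fun ω hω => hω
    · exact fun ω hω => hω.1
  have hBdisj : ∀ i j, i ≠ j → ∀ ω, ω ∈ B i → ω ∉ B j := by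
    have hND : ∀ k, ∀ ω, ω ∈ N → ω ∉ B (k+1) := by
      intro k ω hω hmem
      exact hω (Set.mem_iUnion.2 ⟨k, hBsubA k hmem⟩)
    have hAD : ∀ i j, i < j → ∀ ω, ω ∈ B (i+1) → ω ∉ B (j+1) := by
      intro i j hij ω hωi hωj
      have h1 : ω ∈ A i := hBsubA i hωi
      have h2 : ω ∉ A (j-1) := by
        rcases j with (_|j)
        · omega
        · exact hωj.2
      exact h2 (hAmono (by omega) h1)
    rintro (_|i) (_|j) hij ω hωi hωj
    · omega
    · exact hND j ω hωi hωj
    · exact hND i ω hωj hωi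
    · rcases Nat.lt_or_ge i j with h | h
      · exact hAD i j h ω hωi hωj
      · exact hAD j i (by omega) ω hωj hωi
  have hBcover : ∀ ω, ∃ j, ω ∈ B j := by
    intro ω
    by_cases hω : ω ∈ ⋃ k, A k
    · obtain ⟨k, hk⟩ := Set.mem_iUnion.1 hω
      have hex : ∃ k, ω ∈ A k := ⟨k, hk⟩
      classical
      obtain ⟨k0, hk0, hk0min⟩ : ∃ k0, ω ∈ A k0 ∧ ∀ m, m < k0 → ω ∉ A m :=
        ⟨Nat.find hex, Nat.find_spec hex, fun m hm => Nat.find_min hex hm⟩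
      rcases k0 with (_|k1)
      · exact ⟨1, hk0⟩
      · exact ⟨k1 + 2, hk0, hk0min k1 (Nat.lt_succ_self k1)⟩
    · exact ⟨0, hω⟩
  -- Step 4: the convergent series in `E`
  have hcE : ∀ j, ∃ c : ℝ, ∀ᵐ ω ∂μ, |(n (u j)) ω| ≤ c := fun j => hn.mem_Linf (u j)
  choose c hc using hcE
  set e : ℕ → ℝ := fun j => max (c j) 0 + 1 with hedef
  have he1 : ∀ j, 1 ≤ e j := fun j => by
    have : (0:ℝ) ≤ max (c j) 0 := le_max_right _ _
    simp only [hedef]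
    linarith
  have he0 : ∀ j, 0 < e j := fun j => lt_of_lt_of_le one_pos (he1 j)
  have hecb : ∀ j, ∀ᵐ ω ∂μ, |(n (u j)) ω| ≤ e j := fun j =>
    (hc j).mono fun ω h => h.trans (by
      have : c j ≤ max (c j) 0 := le_max_left _ _
      simp only [hedef]
      linarith)
  set σ : ℕ → E := fun K => ∑ j ∈ Finset.range K, (LinfConst μ ((1/2:ℝ)^j / e j)) • u j
    with hσdef
  have hterm : ∀ j, ∀ᵐ ω ∂μ,
      |(n ((LinfConst μ ((1/2:ℝ)^j / e j)) • u j)) ω| ≤ (1/2:ℝ)^j := by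
    intro j
    rw [hn.norm_smul]
    have hco : ((LinfConst μ ((1/2:ℝ)^j / e j) : Linf μ) : Ω →ₘ[μ] ℝ)
        = AEEqFun.const Ω ((1/2:ℝ)^j / e j) := rfl
    rw [hco]
    filter_upwards [aux_mul_coeFn |AEEqFun.const Ω ((1/2:ℝ)^j / e j)| (n (u j)),
      aux_abs_coeFn (AEEqFun.const (β := ℝ) Ω ((1/2:ℝ)^j / e j)),
      AEEqFun.coeFn_const (α := Ω) (μ := μ) ((1/2:ℝ)^j / e j), hecb j] with ω h1 h2 h3 h4
    rw [h1, h2, h3]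
    have hr : (0:ℝ) ≤ (1/2:ℝ)^j / e j := by positivity
    rw [abs_mul, abs_abs, Function.const_apply, abs_of_nonneg hr]
    calc ((1/2:ℝ)^j / e j) * |(n (u j)) ω| ≤ ((1/2:ℝ)^j / e j) * e j :=
          mul_le_mul_of_nonneg_left h4 hr
      _ = (1/2:ℝ)^j := div_mul_cancel₀ _ (ne_of_gt (he0 j))
  have hsum_bound : ∀ K M, K ≤ M → NinfV μ (n (σ M - σ K)) ≤ (1/2:ℝ)^K * 2 := by
    intro K M hKM
    have hdiff : σ M - σ K = ∑ j ∈ Finset.Ico K M, (LinfConst μ ((1/2:ℝ)^j / e j)) • u j := by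
      simp only [hσdef]
      rw [Finset.sum_Ico_eq_sub _ hKM]
    rw [hdiff]
    have hb := aux_n_sum_le hn (Finset.Ico K M) _ (fun j => (1/2:ℝ)^j) (fun j _ => hterm j)
    refine aux_NinfV_le (hb.mono fun ω h => h.trans ?_)
    rw [Finset.sum_Ico_eq_sum_range]
    calc ∑ i ∈ Finset.range (M - K), (1/2:ℝ)^(K + i)
        = (1/2:ℝ)^K * ∑ i ∈ Finset.range (M - K), (1/2:ℝ)^i := by
          rw [Finset.mul_sum]
          exact Finset.sum_congr rfl fun i _ => pow_add _ _ _
      _ ≤ (1/2:ℝ)^K * 2 :=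
          mul_le_mul_of_nonneg_left (sum_geometric_two_le (M - K)) (by positivity)
  have hσCauchy : dCauchy (fun a b : E => NinfV μ (n (a - b))) σ := by
    intro ε hε
    obtain ⟨M0, hM0⟩ := exists_pow_lt_of_lt_one (by linarith : (0:ℝ) < ε/2)
      (by norm_num : (1/2:ℝ) < 1)
    have key : ∀ a b : ℕ, M0 ≤ a → a ≤ b → NinfV μ (n (σ a - σ b)) < ε := by
      intro a b ha hab
      rw [aux_n_sub_rev hn]
      have h1 := hsum_bound a b hab
      have h2 : (1/2:ℝ)^a ≤ (1/2:ℝ)^M0 := pow_le_pow_of_le_one (by norm_num) (by norm_num) ha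
      calc NinfV μ (n (σ b - σ a)) ≤ (1/2:ℝ)^a * 2 := h1
        _ ≤ (1/2:ℝ)^M0 * 2 := by linarith
        _ < ε := by linarith
    refine ⟨M0, fun i hi j hj => ?_⟩
    rcases le_total i j with h | h
    · exact key i j hi h
    · have := key j i hj h
      rw [aux_n_sub_rev hn] at this
      exact this
  obtain ⟨Y, hYt⟩ := hcomp σ hσCauchy
  -- Step 5: the scalar ξ
  set D : ℕ → ℝ := fun j => e j * 2^j with hDdef
  have hD0 : ∀ j, 0 ≤ D j := fun j => by
    have := he0 j
    simp only [hDdef]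
    positivity
  set gξ : Ω → ℝ := fun ω => ∑' j, (B j).indicator (fun _ => D j) ω with hgξdef
  have hgval : ∀ ω j, ω ∈ B j → gξ ω = D j := by
    intro ω j hω
    simp only [hgξdef]
    rw [tsum_eq_single j fun i hij =>
      Set.indicator_of_notMem (hBdisj j i (Ne.symm hij) ω hω) _]
    rw [Set.indicator_of_mem hω]
  have hgmeas : Measurable gξ := by
    have hFmeas : ∀ K : ℕ,
        Measurable (fun ω => ∑ j ∈ Finset.range K, (B j).indicator (fun _ => D j) ω) :=
      fun K => Finset.measurable_sum _ fun j _ => measurable_const.indicator (hBmeas j)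
    refine measurable_of_tendsto_metrizable hFmeas (tendsto_pi_nhds.2 fun ω => ?_)
    obtain ⟨j0, hj0⟩ := hBcover ω
    refine tendsto_atTop_of_eventually_const (i₀ := j0 + 1) fun K hK => ?_
    rw [hgval ω j0 hj0]
    rw [Finset.sum_eq_single j0
      (fun i _ hij => Set.indicator_of_notMem (hBdisj j0 i (Ne.symm hij) ω hj0) _)
      (fun habs => absurd (Finset.mem_range.2 (by omega : j0 < K)) habs)]
    rw [Set.indicator_of_mem hj0]
  set ξ : Ω →ₘ[μ] ℝ := AEEqFun.mk gξ hgmeas.aestronglyMeasurable with hξdef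
  refine ⟨ξ, Y, ?_⟩
  -- Step 6: identification of `ξ • T Y` with `z` on each piece
  have hpiece : ∀ j, (indL0 μ (B j) (hBmeas j)) • (ξ • T Y) = (indL0 μ (B j) (hBmeas j)) • z := by
    intro j
    have hscal : indL0 μ (B j) (hBmeas j) * ξ
        = AEEqFun.const Ω (D j) * indL0 μ (B j) (hBmeas j) := by
      apply aux_eq_of_ae
      filter_upwards [aux_mul_coeFn (indL0 μ (B j) (hBmeas j)) ξ,
        aux_mul_coeFn (AEEqFun.const Ω (D j)) (indL0 μ (B j) (hBmeas j)),
        aux_indL0_coeFn (B j) (hBmeas j), AEEqFun.coeFn_mk gξ hgmeas.aestronglyMeasurable,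
        AEEqFun.coeFn_const (α := Ω) (μ := μ) (D j)] with ω h1 h2 h3 h4 h5
      rw [h1, h2, h3, h4, h5, Function.const_apply]
      by_cases hω : ω ∈ B j
      · rw [Set.indicator_of_mem hω, Pi.one_apply, hgval ω j hω]
        ring
      · rw [Set.indicator_of_notMem hω]
        ring
    set η : Ω →ₘ[μ] ℝ := AEEqFun.const Ω (D j) * indL0 μ (B j) (hBmeas j) with hηdef
    have hηco : ∀ᵐ ω ∂μ, |η ω| ≤ D j := by
      filter_upwards [aux_mul_coeFn (AEEqFun.const Ω (D j)) (indL0 μ (B j) (hBmeas j)),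
        aux_indL0_coeFn (B j) (hBmeas j),
        AEEqFun.coeFn_const (α := Ω) (μ := μ) (D j)] with ω h1 h2 h3
      rw [h1, h2, h3, Function.const_apply]
      by_cases hω : ω ∈ B j
      · rw [Set.indicator_of_mem hω, Pi.one_apply, mul_one, abs_of_nonneg (hD0 j)]
      · rw [Set.indicator_of_notMem hω, mul_zero, abs_zero]
        exact hD0 j
    have hkey : ∀ K, j < K → η • T (σ K) = (indL0 μ (B j) (hBmeas j)) • z := by
      intro K hK
      have h1 : T (σ K) = ∑ i ∈ Finset.range K,
          ((AEEqFun.const Ω ((1/2:ℝ)^i / e i) : Ω →ₘ[μ] ℝ) • T (u i)) := by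
        simp only [hσdef]
        rw [aux_T_sum S hT]
        exact Finset.sum_congr rfl fun i _ => hT.2 _ _
      rw [h1, Finset.smul_sum]
      have hzero : ∀ i ∈ Finset.range K, i ≠ j →
          η • ((AEEqFun.const Ω ((1/2:ℝ)^i / e i) : Ω →ₘ[μ] ℝ) • T (u i)) = 0 := by
        intro i _ hij
        rw [hTu i, ← mul_smul, ← mul_smul]
        have hz : η * AEEqFun.const Ω ((1/2:ℝ)^i / e i) * indL0 μ (B i) (hBmeas i) = 0 := by
          apply aux_eq_of_ae
          filter_upwards [aux_mul_coeFn (η * AEEqFun.const Ω ((1/2:ℝ)^i / e i))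
              (indL0 μ (B i) (hBmeas i)),
            aux_mul_coeFn η (AEEqFun.const Ω ((1/2:ℝ)^i / e i)),
            aux_mul_coeFn (AEEqFun.const Ω (D j)) (indL0 μ (B j) (hBmeas j)),
            aux_indL0_coeFn (B i) (hBmeas i), aux_indL0_coeFn (B j) (hBmeas j),
            AEEqFun.coeFn_zero (β := ℝ) (μ := μ)] with ω k1 k2 k3 k4 k5 k6
          rw [k1, k2, k3, k4, k5, k6, Pi.zero_apply]
          by_cases hω : ω ∈ B i
          · rw [Set.indicator_of_notMem (hBdisj i j hij ω hω)]
            ring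
          · rw [Set.indicator_of_notMem hω]
            ring
        rw [hz, zero_smul]
      have hjj : j ∉ Finset.range K →
          η • ((AEEqFun.const Ω ((1/2:ℝ)^j / e j) : Ω →ₘ[μ] ℝ) • T (u j)) = 0 :=
        fun habs => absurd (Finset.mem_range.2 hK) habs
      rw [Finset.sum_eq_single j hzero hjj, hTu j, ← mul_smul, ← mul_smul]
      have hone : η * AEEqFun.const Ω ((1/2:ℝ)^j / e j) * indL0 μ (B j) (hBmeas j)
          = indL0 μ (B j) (hBmeas j) := by
        apply aux_eq_of_ae
        filter_upwards [aux_mul_coeFn (η * AEEqFun.const Ω ((1/2:ℝ)^j / e j))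
            (indL0 μ (B j) (hBmeas j)),
          aux_mul_coeFn η (AEEqFun.const Ω ((1/2:ℝ)^j / e j)),
          aux_mul_coeFn (AEEqFun.const Ω (D j)) (indL0 μ (B j) (hBmeas j)),
          aux_indL0_coeFn (B j) (hBmeas j)] with ω k1 k2 k3 k4
        rw [k1, k2, k3, k4]
        have hDr : D j * ((1/2:ℝ)^j / e j) = 1 := by
          simp only [hDdef]
          rw [div_eq_mul_inv]
          have h2 : (2:ℝ)^j * (1/2:ℝ)^j = 1 := by
            rw [← mul_pow]
            norm_num
          have hej : e j ≠ 0 := ne_of_gt (he0 j)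
          calc e j * 2 ^ j * ((1/2:ℝ)^j * (e j)⁻¹) = (e j * (e j)⁻¹) * (2^j * (1/2:ℝ)^j) := by ring
            _ = 1 := by rw [h2, mul_inv_cancel₀ hej, one_mul]
        by_cases hω : ω ∈ B j
        · rw [Set.indicator_of_mem hω, Pi.one_apply,
            AEEqFun.coeFn_const_eq, AEEqFun.coeFn_const_eq]
          linear_combination hDr
        · rw [Set.indicator_of_notMem hω]
          ring
      rw [hone]
    rw [← mul_smul, hscal]
    refine aux_eq_of_ae_le_seq S _ _
      (fun K => D j * NinfV μ (n (Y - σ K))) (j+1) ?_ ?_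
    · have ht : Tendsto (fun K => D j * NinfV μ (n (σ K - Y))) atTop (nhds (D j * 0)) :=
        hYt.const_mul (D j)
      have heq2 : (fun K => D j * NinfV μ (n (Y - σ K)))
          = fun K => D j * NinfV μ (n (σ K - Y)) :=
        funext fun K => by rw [aux_n_sub_rev hn]
      rw [heq2]
      simpa using ht
    · intro K hK
      have hKj : j < K := by omega
      have hdiffeq : η • T Y - (indL0 μ (B j) (hBmeas j)) • z = η • T (Y - σ K) := by
        rw [aux_T_sub S hT, smul_sub, hkey K hKj]
      rw [hdiffeq]
      have hsm := aux_rnorm_smul_coeFn S η (T (Y - σ K))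
      rw [hiso] at hsm
      have hNle := aux_ae_le_NinfV (hn.mem_Linf (Y - σ K))
      filter_upwards [hsm, hNle, hηco] with ω w1 w2 w3
      rw [w1]
      calc |η ω| * (n (Y - σ K)) ω ≤ |η ω| * |(n (Y - σ K)) ω| :=
            mul_le_mul_of_nonneg_left (le_abs_self _) (abs_nonneg _)
        _ ≤ D j * NinfV μ (n (Y - σ K)) :=
            mul_le_mul w3 w2 (abs_nonneg _) (hD0 j)
  -- conclude
  have hfinal : S.rnorm (ξ • T Y - z) = 0 := by
    apply aux_eq_of_ae
    have hj2 : ∀ j, ∀ᵐ ω ∂μ, ω ∈ B j → (S.rnorm (ξ • T Y - z)) ω = 0 := by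
      intro j
      have h1 : S.rnorm ((indL0 μ (B j) (hBmeas j)) • (ξ • T Y - z)) = 0 := by
        rw [smul_sub, hpiece j, sub_self]
        exact (S.isRNNorm.eq_zero_iff 0).2 rfl
      have h2 := aux_rnorm_smul_coeFn S (indL0 μ (B j) (hBmeas j)) (ξ • T Y - z)
      rw [h1] at h2
      filter_upwards [h2, aux_indL0_coeFn (B j) (hBmeas j),
        AEEqFun.coeFn_zero (β := ℝ) (μ := μ)] with ω w1 w2 w3 hω
      rw [w3, Pi.zero_apply] at w1
      rw [w2, Set.indicator_of_mem hω, Pi.one_apply, abs_one, one_mul] at w1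
      exact w1.symm
    filter_upwards [(ae_all_iff).2 hj2, AEEqFun.coeFn_zero (β := ℝ) (μ := μ)] with ω hall h0
    rw [h0, Pi.zero_apply]
    obtain ⟨j, hj⟩ := hBcover ω
    exact hall j hj
  have hzero := (S.isRNNorm.eq_zero_iff _).1 hfinal
  rw [sub_eq_zero] at hzero
  exact hzero.symm

end
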